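/- arXiv:2309.12696 — 2 statements merged into one kernel-verified Lean document; each statement's English description precedes it below -/
import Mathlib

section
/- Let π¹,…,πⁿ and β¹,…,βⁿ be probability mass functions on finite sets A¹,…,Aⁿ with each βⁱ everywhere positive, and let λ₁,…,λₙ ≥ 0 with Σᵢ λᵢ = 1. Define the joint distributions π(a) = Πᵢ πⁱ(aⁱ) and β(a) = Πᵢ βⁱ(aⁱ) on the product space. Then 0 ≤ Σᵢ λᵢ Σ_{aⁱ} πⁱ(aⁱ)(πⁱ(aⁱ)/βⁱ(aⁱ) − 1) ≤ Σ_a π(a)(π(a)/β(a) − 1), i.e. the counterfactual divergence D_CF := Σᵢ λᵢ D_CQL(πⁱ,βⁱ) is bounded above by the joint divergence D_CQL(π,β). -/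
open Finset

lemma aux_sum_sub_one_le_prod {ι : Type*} (s : Finset ι) (f : ι → ℝ)
    (hf : ∀ i ∈ s, 1 ≤ f i) :
    ∑ i ∈ s, (f i - 1) ≤ (∏ i ∈ s, f i) - 1 := by
  induction s using Finset.cons_induction with
  | empty => simp
  | cons a s ha ih =>
    simp only [Finset.sum_cons, Finset.prod_cons]
    have h1 : 1 ≤ f a := hf a (Finset.mem_cons_self a s)
    have h2 : ∑ i ∈ s, (f i - 1) ≤ (∏ i ∈ s, f i) - 1 :=
      ih fun i hi => hf i (Finset.mem_cons_of_mem hi)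
    have h3 : (1:ℝ) ≤ ∏ i ∈ s, f i := by
      calc (1:ℝ) = ∏ _i ∈ s, (1:ℝ) := by simp
        _ ≤ ∏ i ∈ s, f i := Finset.prod_le_prod (fun _ _ => zero_le_one)
            fun i hi => hf i (Finset.mem_cons_of_mem hi)
    nlinarith [mul_nonneg (sub_nonneg.2 h1) (sub_nonneg.2 h3)]

lemma aux_D_eq {A : Type*} [Fintype A] (p q : A → ℝ)
    (hq : ∀ a, 0 < q a) (hp1 : ∑ a, p a = 1) (hq1 : ∑ a, q a = 1) :
    ∑ a, p a * (p a / q a - 1) = (∑ a, p a ^ 2 / q a) - 1 := by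
  have h : ∀ a : A, p a * (p a / q a - 1) = p a ^ 2 / q a - p a := by
    intro a
    rw [mul_sub, mul_one, ← mul_div_assoc, ← sq]
  rw [Finset.sum_congr rfl fun a _ => h a, Finset.sum_sub_distrib, hp1]

lemma aux_D_nonneg {A : Type*} [Fintype A] (p q : A → ℝ)
    (hp : ∀ a, 0 ≤ p a) (hq : ∀ a, 0 < q a)
    (hp1 : ∑ a, p a = 1) (hq1 : ∑ a, q a = 1) :
    1 ≤ ∑ a, p a ^ 2 / q a := by
  have key : ∑ a, (p a - q a) ^ 2 / q a = (∑ a, p a ^ 2 / q a) - 1 := by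
    have : ∀ a : A, (p a - q a) ^ 2 / q a = p a ^ 2 / q a - 2 * p a + q a := by
      intro a
      have hq' : q a ≠ 0 := (hq a).ne'
      field_simp
      ring
    rw [Finset.sum_congr rfl fun a _ => this a]
    rw [Finset.sum_add_distrib, Finset.sum_sub_distrib, ← Finset.mul_sum, hp1, hq1]
    ring
  have h0 : 0 ≤ ∑ a, (p a - q a) ^ 2 / q a :=
    Finset.sum_nonneg fun a _ => div_nonneg (sq_nonneg _) (hq a).le
  linarith

theorem dcf_le_dcql {n : ℕ} (A : Fin n → Type*) [∀ i, Fintype (A i)]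
    (π β : ∀ i, A i → ℝ) (lam : Fin n → ℝ)
    (hπ0 : ∀ i a, 0 ≤ π i a) (hβpos : ∀ i a, 0 < β i a)
    (hπ1 : ∀ i, ∑ a, π i a = 1) (hβ1 : ∀ i, ∑ a, β i a = 1)
    (hlam0 : ∀ i, 0 ≤ lam i) (hlam1 : ∑ i, lam i = 1) :
    0 ≤ ∑ i, lam i * ∑ a, π i a * (π i a / β i a - 1) ∧
    (∑ i, lam i * ∑ a, π i a * (π i a / β i a - 1)) ≤
      ∑ a : (∀ i, A i), (∏ i, π i (a i)) * ((∏ i, π i (a i)) / (∏ i, β i (a i)) - 1) := by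
  set S : Fin n → ℝ := fun i => ∑ a, π i a ^ 2 / β i a with hS
  have hD : ∀ i, ∑ a, π i a * (π i a / β i a - 1) = S i - 1 := fun i =>
    aux_D_eq (π i) (β i) (hβpos i) (hπ1 i) (hβ1 i)
  have hS1 : ∀ i, 1 ≤ S i := fun i =>
    aux_D_nonneg (π i) (β i) (hπ0 i) (hβpos i) (hπ1 i) (hβ1 i)
  -- rewrite the RHS
  have hRHS : ∑ a : (∀ i, A i), (∏ i, π i (a i)) * ((∏ i, π i (a i)) / (∏ i, β i (a i)) - 1)
      = (∏ i, S i) - 1 := by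
    have h1 : ∀ a : (∀ i, A i),
        (∏ i, π i (a i)) * ((∏ i, π i (a i)) / (∏ i, β i (a i)) - 1)
        = (∏ i, π i (a i) ^ 2 / β i (a i)) - ∏ i, π i (a i) := by
      intro a
      rw [mul_sub, mul_one, ← Finset.prod_div_distrib, ← Finset.prod_mul_distrib]
      congr 1
      apply Finset.prod_congr rfl
      intro i _
      rw [← mul_div_assoc, ← sq]
    have e1 : (∏ i, S i) = ∑ x : (∀ i, A i), ∏ i, π i (x i) ^ 2 / β i (x i) := by
      rw [hS, Finset.prod_univ_sum, Fintype.piFinset_univ]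
    have e2 : (∏ i, ∑ a, π i a) = ∑ x : (∀ i, A i), ∏ i, π i (x i) := by
      rw [Finset.prod_univ_sum, Fintype.piFinset_univ]
    rw [Finset.sum_congr rfl fun a _ => h1 a, Finset.sum_sub_distrib, ← e1, ← e2]
    simp [hπ1]
  rw [hRHS]
  have hsum_nonneg : ∀ i, (0:ℝ) ≤ lam i * (S i - 1) := fun i =>
    mul_nonneg (hlam0 i) (by linarith [hS1 i])
  constructor
  · apply Finset.sum_nonneg
    intro i _
    rw [hD i]
    exact hsum_nonneg i
  · calc ∑ i, lam i * ∑ a, π i a * (π i a / β i a - 1)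
        = ∑ i, lam i * (S i - 1) := by
          exact Finset.sum_congr rfl fun i _ => by rw [hD i]
      _ ≤ ∑ i, (S i - 1) := by
          apply Finset.sum_le_sum
          intro i _
          have hli : lam i ≤ 1 := by
            calc lam i ≤ ∑ j, lam j :=
                  Finset.single_le_sum (fun j _ => hlam0 j) (Finset.mem_univ i)
              _ = 1 := hlam1
          nlinarith [hS1 i, hlam0 i]
      _ ≤ (∏ i, S i) - 1 := aux_sum_sub_one_le_prod Finset.univ S fun i _ => hS1 i
end

section
/- Let π¹,…,πⁿ, β¹,…,βⁿ be probability mass functions on finite sets, each βⁱ everywhere positive, and λ in the probability simplex. Let j be an index maximizing E_{πᵏ}[πᵏ/βᵏ] over k. If D_CF := Σᵢ λᵢ Σ_{aⁱ} πⁱ(aⁱ)(πⁱ(aⁱ)/βⁱ(aⁱ) − 1) > 0, then D_CQL(π,β)/D_CF ≥ exp(Σ_{i≠j} KL(πⁱ‖βⁱ)), where D_CQL(π,β) = Πᵢ(Σ_{aⁱ} πⁱ(aⁱ)²/βⁱ(aⁱ)) − 1 is the divergence of the joint product distributions. -/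
open Finset

theorem dcql_ratio_ge_exp_kl {n : ℕ} (A : Fin n → Type*) [∀ i, Fintype (A i)]
    (π β : ∀ i, A i → ℝ) (lam : Fin n → ℝ) (j : Fin n)
    (hπ0 : ∀ i a, 0 ≤ π i a) (hβpos : ∀ i a, 0 < β i a)
    (hπ1 : ∀ i, ∑ a, π i a = 1) (hβ1 : ∀ i, ∑ a, β i a = 1)
    (hlam0 : ∀ i, 0 ≤ lam i) (hlam1 : ∑ i, lam i = 1)
    (hj : ∀ k, (∑ a, π k a * (π k a / β k a)) ≤ ∑ a, π j a * (π j a / β j a))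
    (hDCF : 0 < ∑ i, lam i * ∑ a, π i a * (π i a / β i a - 1)) :
    Real.exp (∑ i ∈ Finset.univ.erase j, ∑ a, π i a * Real.log (π i a / β i a)) ≤
      ((∏ i, ∑ a, (π i a) ^ 2 / β i a) - 1) /
        (∑ i, lam i * ∑ a, π i a * (π i a / β i a - 1)) := by
  set S : Fin n → ℝ := fun i => ∑ a, (π i a) ^ 2 / β i a with hSdef
  -- S i = ∑ a, π * (π/β)
  have hST : ∀ i, (∑ a, π i a * (π i a / β i a)) = S i := by
    intro i
    refine Finset.sum_congr rfl fun a _ => ?_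
    rw [mul_div_assoc', sq]
  -- 1 ≤ S i by Cauchy-Schwarz
  have hS1 : ∀ i, 1 ≤ S i := by
    intro i
    have h := Finset.sum_mul_sq_le_sq_mul_sq Finset.univ
      (fun a => π i a / Real.sqrt (β i a)) (fun a => Real.sqrt (β i a))
    have h1 : (∑ a, π i a / Real.sqrt (β i a) * Real.sqrt (β i a)) = 1 := by
      rw [← hπ1 i]
      refine Finset.sum_congr rfl fun a _ => ?_
      exact div_mul_cancel₀ _ (Real.sqrt_ne_zero'.2 (hβpos i a))
    have h2 : (∑ a, (π i a / Real.sqrt (β i a)) ^ 2) = S i := by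
      refine Finset.sum_congr rfl fun a _ => ?_
      rw [div_pow, Real.sq_sqrt (hβpos i a).le]
    have h3 : (∑ a, (Real.sqrt (β i a)) ^ 2) = 1 := by
      rw [← hβ1 i]
      exact Finset.sum_congr rfl fun a _ => Real.sq_sqrt (hβpos i a).le
    rw [h1, h2, h3, one_pow, mul_one] at h
    exact h
  -- exp KL_i ≤ S i
  have hKL : ∀ i, Real.exp (∑ a, π i a * Real.log (π i a / β i a)) ≤ S i := by
    intro i
    have hAM := Real.geom_mean_le_arith_mean_weighted Finset.univ (π i)
      (fun a => π i a / β i a) (fun a _ => hπ0 i a) (hπ1 i)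
      (fun a _ => div_nonneg (hπ0 i a) (hβpos i a).le)
    rw [hST i] at hAM
    refine le_trans (le_of_eq ?_) hAM
    rw [Real.exp_sum]
    refine Finset.prod_congr rfl fun a _ => ?_
    rcases eq_or_lt_of_le (hπ0 i a) with h0 | h0
    · rw [← h0, zero_mul, Real.exp_zero, Real.rpow_zero]
    · have hz : 0 < π i a / β i a := div_pos h0 (hβpos i a)
      rw [Real.rpow_def_of_pos hz, mul_comm]
  -- D ≤ S j - 1
  have hTsub : ∀ i, (∑ a, π i a * (π i a / β i a - 1)) = S i - 1 := by
    intro i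
    have : (∑ a, π i a * (π i a / β i a - 1))
        = (∑ a, π i a * (π i a / β i a)) - ∑ a, π i a := by
      rw [← Finset.sum_sub_distrib]
      exact Finset.sum_congr rfl fun a _ => by ring
    rw [this, hST i, hπ1 i]
  have hD : (∑ i, lam i * ∑ a, π i a * (π i a / β i a - 1)) ≤ S j - 1 := by
    calc (∑ i, lam i * ∑ a, π i a * (π i a / β i a - 1))
        ≤ ∑ i : Fin n, lam i * (S j - 1) := by
          refine Finset.sum_le_sum fun i _ => ?_
          rw [hTsub i]
          refine mul_le_mul_of_nonneg_left ?_ (hlam0 i)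
          have := hj i
          rw [hST i, hST j] at this
          linarith
      _ = S j - 1 := by rw [← Finset.sum_mul, hlam1, one_mul]
  set P : ℝ := ∏ i ∈ Finset.univ.erase j, S i with hPdef
  have hP1 : 1 ≤ P := by
    have := Finset.prod_le_prod (s := Finset.univ.erase j) (f := fun _ => (1:ℝ))
      (g := S) (fun i _ => zero_le_one) (fun i _ => hS1 i)
    simpa using this
  have hexpP : Real.exp (∑ i ∈ Finset.univ.erase j, ∑ a, π i a * Real.log (π i a / β i a)) ≤ P := by
    rw [Real.exp_sum]
    exact Finset.prod_le_prod (fun i _ => (Real.exp_pos _).le) (fun i _ => hKL i)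
  have hprod : (∏ i, S i) = S j * P := (Finset.mul_prod_erase _ _ (Finset.mem_univ j)).symm
  rw [le_div_iff₀ hDCF]
  calc Real.exp (∑ i ∈ Finset.univ.erase j, ∑ a, π i a * Real.log (π i a / β i a)) *
        (∑ i, lam i * ∑ a, π i a * (π i a / β i a - 1))
      ≤ P * (S j - 1) := by
        refine mul_le_mul hexpP hD hDCF.le (le_trans zero_le_one hP1)
    _ ≤ S j * P - 1 := by nlinarith [hS1 j]
    _ = (∏ i, S i) - 1 := by rw [hprod]
end
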